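/- Let $a, b, c, d$ be nonzero rationals, $m_1, m_2, m_3, m_4 \geq 3$ odd integers, $M = \mathrm{lcm}(m_1, m_2, m_3, m_4)$, $M_i = M/m_i$. Suppose $p, q, r \in \mathbb{Q}$ and nonzero $v_1, v_2, v_3, v_4, u \in \mathbb{Q}$ satisfy $v_1^{2m_1}(p^2 - a) = v_2^{2m_2}(q^2 - b) = v_3^{2m_3}(r^2 - c)$ and $v_4^{2m_4} + d(r^2 - c) v_3^{2m_3} \neq 0$. Set $T = \frac{u^2}{v_4^{2m_4} + d(r^2 - c)v_3^{2m_3}}$ and assume $T \neq 0$ and $r^2 \neq c$. Define $x_1 = \frac{1}{v_1^2 T^{M_1}}$, $x_2 = \frac{1}{v_2^2 T^{M_2}}$, $x_3 = \frac{1}{v_3^2 T^{M_3}}$, $x_4 = v_4^2 T^{M_4}$, $y_1 = p$, $y_2 = q$, $y_3 = r$, $y_4 = u T^{(M-1)/2}$. Then $\frac{y_1^2 - a}{x_1^{m_1}} = \frac{y_2^2 - b}{x_2^{m_2}} = \frac{y_3^2 - c}{x_3^{m_3}} = \frac{y_4^2 - x_4^{m_4}}{d}$. -/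
import Mathlib


theorem parametric_solution_system_three (a b c d : ℚ)
    (ha : a ≠ 0) (hb : b ≠ 0) (hc : c ≠ 0) (hd : d ≠ 0)
    (m1 m2 m3 m4 : ℕ) (hm1 : 3 ≤ m1) (hm2 : 3 ≤ m2) (hm3 : 3 ≤ m3) (hm4 : 3 ≤ m4)
    (ho1 : Odd m1) (ho2 : Odd m2) (ho3 : Odd m3) (ho4 : Odd m4)
    (p q r v1 v2 v3 v4 u : ℚ)
    (hv1 : v1 ≠ 0) (hv2 : v2 ≠ 0) (hv3 : v3 ≠ 0) (hv4 : v4 ≠ 0) (hu : u ≠ 0)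
    (h1 : v1 ^ (2 * m1) * (p ^ 2 - a) = v2 ^ (2 * m2) * (q ^ 2 - b))
    (h2 : v2 ^ (2 * m2) * (q ^ 2 - b) = v3 ^ (2 * m3) * (r ^ 2 - c))
    (hden : v4 ^ (2 * m4) + d * (r ^ 2 - c) * v3 ^ (2 * m3) ≠ 0)
    (hrc : r ^ 2 ≠ c) :
    let M := Nat.lcm (Nat.lcm m1 m2) (Nat.lcm m3 m4)
    let M1 := M / m1
    let M2 := M / m2
    let M3 := M / m3
    let M4 := M / m4
    let T := u ^ 2 / (v4 ^ (2 * m4) + d * (r ^ 2 - c) * v3 ^ (2 * m3))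
    T ≠ 0 →
    let x1 := 1 / (v1 ^ 2 * T ^ M1)
    let x2 := 1 / (v2 ^ 2 * T ^ M2)
    let x3 := 1 / (v3 ^ 2 * T ^ M3)
    let x4 := v4 ^ 2 * T ^ M4
    let y1 := p
    let y2 := q
    let y3 := r
    let y4 := u * T ^ ((M - 1) / 2)
    ((y1 ^ 2 - a) / x1 ^ m1 = (y2 ^ 2 - b) / x2 ^ m2) ∧
    ((y2 ^ 2 - b) / x2 ^ m2 = (y3 ^ 2 - c) / x3 ^ m3) ∧
    ((y3 ^ 2 - c) / x3 ^ m3 = (y4 ^ 2 - x4 ^ m4) / d) := by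
  intro M M1 M2 M3 M4 T hT
  intro x1 x2 x3 x4 y1 y2 y3 y4
  have hd1 : m1 ∣ M := (Nat.dvd_lcm_left m1 m2).trans (Nat.dvd_lcm_left _ _)
  have hd2 : m2 ∣ M := (Nat.dvd_lcm_right m1 m2).trans (Nat.dvd_lcm_left _ _)
  have hd3 : m3 ∣ M := (Nat.dvd_lcm_left m3 m4).trans (Nat.dvd_lcm_right _ _)
  have hd4 : m4 ∣ M := (Nat.dvd_lcm_right m3 m4).trans (Nat.dvd_lcm_right _ _)
  have e1 : M1 * m1 = M := Nat.div_mul_cancel hd1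
  have e2 : M2 * m2 = M := Nat.div_mul_cancel hd2
  have e3 : M3 * m3 = M := Nat.div_mul_cancel hd3
  have e4 : M4 * m4 = M := Nat.div_mul_cancel hd4
  have hMdvd : M ∣ (m1 * m2) * (m3 * m4) :=
    Nat.lcm_dvd ((Nat.lcm_dvd_mul m1 m2).trans (dvd_mul_right _ _))
      ((Nat.lcm_dvd_mul m3 m4).trans (dvd_mul_left _ _))
  have hModd : Odd M := by
    rcases Nat.even_or_odd M with h | h
    · exact absurd (h.two_dvd.trans hMdvd)
        (((ho1.mul ho2).mul (ho3.mul ho4)).not_two_dvd_nat)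
    · exact h
  have hMpos : 0 < M := hModd.pos
  have hev : (M - 1) / 2 * 2 = M - 1 :=
    Nat.div_mul_cancel (Nat.Odd.sub_odd hModd odd_one).two_dvd
  have hM1 : M - 1 + 1 = M := Nat.succ_pred_eq_of_pos hMpos
  set D := v4 ^ (2 * m4) + d * (r ^ 2 - c) * v3 ^ (2 * m3) with hD
  have hu2 : T * D = u ^ 2 := div_mul_cancel₀ _ hden
  have key : ∀ (v : ℚ) (K m : ℕ) (s : ℚ), K * m = M →
      s / (1 / (v ^ 2 * T ^ K)) ^ m = s * (v ^ (2 * m) * T ^ M) := by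
    intro v K m s h
    rw [div_pow, one_pow, div_div_eq_mul_div, div_one, mul_pow, ← pow_mul, ← pow_mul,
      Nat.mul_comm 2 m, Nat.mul_comm m 2, h]
  have k1 := key v1 M1 m1 (p ^ 2 - a) e1
  have k2 := key v2 M2 m2 (q ^ 2 - b) e2
  have k3 := key v3 M3 m3 (r ^ 2 - c) e3
  have hy4 : y4 ^ 2 = u ^ 2 * T ^ (M - 1) := by
    show (u * T ^ ((M - 1) / 2)) ^ 2 = _
    rw [mul_pow, ← pow_mul, hev]
  have hx4 : x4 ^ m4 = v4 ^ (2 * m4) * T ^ M := by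
    show (v4 ^ 2 * T ^ M4) ^ m4 = _
    rw [mul_pow, ← pow_mul, ← pow_mul, Nat.mul_comm 2 m4, Nat.mul_comm m4 2, e4]
  have hTM : T ^ M = T ^ (M - 1) * T := by rw [← pow_succ, hM1]
  refine ⟨?_, ?_, ?_⟩
  · show (p ^ 2 - a) / x1 ^ m1 = (q ^ 2 - b) / x2 ^ m2
    rw [show x1 = 1 / (v1 ^ 2 * T ^ M1) from rfl, show x2 = 1 / (v2 ^ 2 * T ^ M2) from rfl,
      k1, k2]
    linear_combination T ^ M * h1
  · show (q ^ 2 - b) / x2 ^ m2 = (r ^ 2 - c) / x3 ^ m3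
    rw [show x2 = 1 / (v2 ^ 2 * T ^ M2) from rfl, show x3 = 1 / (v3 ^ 2 * T ^ M3) from rfl,
      k2, k3]
    linear_combination T ^ M * h2
  · show (r ^ 2 - c) / x3 ^ m3 = (y4 ^ 2 - x4 ^ m4) / d
    rw [show x3 = 1 / (v3 ^ 2 * T ^ M3) from rfl, k3, hy4, hx4, hTM, eq_div_iff hd]
    linear_combination T ^ (M - 1) * hu2 - T ^ (M - 1) * T * hD
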